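/- arXiv:1409.4927 — 3 statements merged into one kernel-verified Lean document; each statement's English description precedes it below -/
import Mathlib

section
/- Let D = {z ∈ ℂ : ‖z‖ ≤ 1} be the closed unit disc and let g : D \ {0} → ℝ be continuous. Suppose for some u₀ ∈ ℝ the fiber g⁻¹({u₀}) is nonempty and connected, and that 0 does not belong to the closure (in ℂ) of g⁻¹({u₀}). Then g is not surjective onto ℝ. -/
open Set Metric

/-- The punctured ball in `ℂ` is preconnected. -/
lemma isPreconnected_punctured_ball {ε : ℝ} :
    IsPreconnected (Metric.ball (0:ℂ) ε \ {0}) := by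
  have hrank : (1 : Cardinal) < Module.rank ℝ ℂ := by
    rw [Complex.rank_real_complex]; exact Cardinal.one_lt_two
  have hs : IsPreconnected (Metric.sphere (0:ℂ) 1) := isPreconnected_sphere hrank 0 1
  have hprod : IsPreconnected ((Ioo (0:ℝ) ε) ×ˢ Metric.sphere (0:ℂ) 1) :=
    isPreconnected_Ioo.prod hs
  have hcont : Continuous (fun p : ℝ × ℂ => p.1 • p.2) := continuous_fst.smul continuous_snd
  have himg : (fun p : ℝ × ℂ => p.1 • p.2) '' ((Ioo (0:ℝ) ε) ×ˢ Metric.sphere (0:ℂ) 1)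
      = Metric.ball (0:ℂ) ε \ {0} := by
    ext w
    constructor
    · rintro ⟨⟨t, z⟩, ⟨⟨ht0, htε⟩, hz⟩, rfl⟩
      simp only [mem_sphere_iff_norm, sub_zero] at hz
      constructor
      · simp only [Metric.mem_ball, dist_zero_right, norm_smul, Real.norm_eq_abs,
          abs_of_pos ht0, hz, mul_one]
        exact htε
      · simp only [mem_singleton_iff, smul_eq_zero, not_or]
        refine ⟨ht0.ne', fun h => by simp [h] at hz⟩
    · rintro ⟨hw, hw0⟩
      simp only [Metric.mem_ball, dist_zero_right] at hw
      simp only [mem_singleton_iff] at hw0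
      have hwn : ‖w‖ ≠ 0 := norm_ne_zero_iff.2 hw0
      refine ⟨(‖w‖, ‖w‖⁻¹ • w), ⟨⟨norm_pos_iff.2 hw0, hw⟩, ?_⟩, ?_⟩
      · simp only [mem_sphere_iff_norm, sub_zero, norm_smul, norm_inv, norm_norm]
        exact inv_mul_cancel₀ hwn
      · show ‖w‖ • ‖w‖⁻¹ • w = w
        rw [smul_smul, mul_inv_cancel₀ hwn, one_smul]
  rw [← himg]
  exact hprod.image _ hcont.continuousOn

/-- If `g` is continuous on the punctured closed unit disc, and for some value `u₀` the
fiber `g⁻¹ {u₀}` is nonempty and connected with `0` not in its closure (in `ℂ`), then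
`g` is not surjective onto `ℝ`. -/
theorem not_surjective_of_connected_fiber_avoiding_singularity
    (g : {z : ℂ // ‖z‖ ≤ 1 ∧ z ≠ 0} → ℝ) (hg : Continuous g) (u₀ : ℝ)
    (hconn : IsConnected (g ⁻¹' {u₀}))
    (h0 : (0 : ℂ) ∉ closure (Subtype.val '' (g ⁻¹' {u₀}))) :
    ¬ Function.Surjective g := by
  intro hsurj
  set S := Subtype.val '' (g ⁻¹' {u₀}) with hS
  -- find ε > 0, ε ≤ 1 with ball 0 ε disjoint from S
  obtain ⟨ε₀, hε₀, hball₀⟩ := Metric.isOpen_iff.1 isClosed_closure.isOpen_compl 0 h0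
  set ε := min ε₀ 1 with hε_def
  have hεpos : 0 < ε := lt_min hε₀ one_pos
  have hε1 : ε ≤ 1 := min_le_right _ _
  have hballS : ∀ z ∈ Metric.ball (0:ℂ) ε, z ∉ S := by
    intro z hz hzS
    exact hball₀ (Metric.ball_subset_ball (min_le_left _ _) hz) (subset_closure hzS)
  -- the compact annulus part
  set Aset : Set {z : ℂ // ‖z‖ ≤ 1 ∧ z ≠ 0} := {x | ε ≤ ‖(x : ℂ)‖} with hAset
  have hAcomp : IsCompact Aset := by
    rw [Topology.IsEmbedding.subtypeVal.isCompact_iff]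
    have : Subtype.val '' Aset = Metric.closedBall (0:ℂ) 1 ∩ {z : ℂ | ε ≤ ‖z‖} := by
      ext z
      constructor
      · rintro ⟨⟨z, hz1, hz0⟩, hzA, rfl⟩
        exact ⟨by simpa [Metric.mem_closedBall, dist_zero_right] using hz1, hzA⟩
      · rintro ⟨hz1, hz2⟩
        have hz0 : z ≠ 0 := by
          intro h; rw [h] at hz2; simp at hz2; linarith
        exact ⟨⟨z, by simpa [Metric.mem_closedBall, dist_zero_right] using hz1, hz0⟩, hz2, rfl⟩
    rw [this]
    exact (isCompact_closedBall _ _).inter_right (isClosed_le continuous_const continuous_norm)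
  -- the punctured small ball part
  set Pset : Set {z : ℂ // ‖z‖ ≤ 1 ∧ z ≠ 0} := {x | ‖(x : ℂ)‖ < ε} with hPset
  have hPconn : IsPreconnected Pset := by
    apply Topology.IsInducing.subtypeVal.isPreconnected_image.mp
    have himg : Subtype.val '' Pset = Metric.ball (0:ℂ) ε \ {0} := by
      ext z
      constructor
      · rintro ⟨⟨z, hz1, hz0⟩, hzP, rfl⟩
        exact ⟨by simpa [hPset, Metric.mem_ball, dist_zero_right] using hzP, hz0⟩
      · rintro ⟨hz1, hz0⟩
        simp only [Metric.mem_ball, dist_zero_right] at hz1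
        exact ⟨⟨z, le_trans hz1.le hε1, hz0⟩, hz1, rfl⟩
    show IsPreconnected (Subtype.val '' Pset)
    rw [himg]
    exact isPreconnected_punctured_ball
  -- g on Pset avoids u₀
  have havoid : ∀ x ∈ Pset, g x ≠ u₀ := by
    intro x hx hgx
    exact hballS x.1 (by simpa [hPset, Metric.mem_ball, dist_zero_right] using hx)
      ⟨x, by simpa using hgx, rfl⟩
  -- so g '' Pset lies on one side of u₀
  have hside : g '' Pset ⊆ Iio u₀ ∨ g '' Pset ⊆ Ioi u₀ := by
    refine IsPreconnected.subset_or_subset isOpen_Iio isOpen_Ioi ?_ ?_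
      (hPconn.image g hg.continuousOn)
    · exact Set.disjoint_left.2 fun a ha hb => absurd (lt_trans (mem_Iio.1 ha) (mem_Ioi.1 hb)) (lt_irrefl _)
    · rintro a ⟨x, hx, rfl⟩
      rcases lt_or_gt_of_ne (havoid x hx) with h | h
      · exact Or.inl h
      · exact Or.inr h
  -- g bounded on the compact annulus
  have hAbdd : IsCompact (g '' Aset) := hAcomp.image hg
  rcases hside with hlt | hgt
  · -- g < u₀ on Pset, g ≤ M on Aset : g bounded above, contradicting surjectivity
    obtain ⟨M, hM⟩ := hAbdd.bddAbove
    obtain ⟨x, hx⟩ := hsurj (max M u₀ + 1)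
    rcases lt_or_ge ‖(x : ℂ)‖ ε with h | h
    · have := hlt ⟨x, h, rfl⟩
      simp only [mem_Iio] at this
      have : g x < max M u₀ + 1 := by
        calc g x < u₀ := this
        _ ≤ max M u₀ := le_max_right _ _
        _ < max M u₀ + 1 := by linarith
      rw [hx] at this; linarith
    · have := hM ⟨x, h, rfl⟩
      have : g x < max M u₀ + 1 := by
        calc g x ≤ M := this
        _ ≤ max M u₀ := le_max_left _ _
        _ < max M u₀ + 1 := by linarith
      rw [hx] at this; linarith
  · -- symmetric: g bounded below
    obtain ⟨m, hm⟩ := hAbdd.bddBelow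
    obtain ⟨x, hx⟩ := hsurj (min m u₀ - 1)
    rcases lt_or_ge ‖(x : ℂ)‖ ε with h | h
    · have := hgt ⟨x, h, rfl⟩
      simp only [mem_Ioi] at this
      have : min m u₀ - 1 < g x := by
        calc min m u₀ - 1 < min m u₀ := by linarith
        _ ≤ u₀ := min_le_right _ _
        _ < g x := this
      rw [hx] at this; linarith
    · have := hm ⟨x, h, rfl⟩
      have : min m u₀ - 1 < g x := by
        calc min m u₀ - 1 < min m u₀ := by linarith
        _ ≤ m := min_le_left _ _
        _ ≤ g x := this
      rw [hx] at this; linarith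
end

section
/- Fix α > 0 and define g : ℝ² \ {0} → ℝ (with its Euclidean inner product) by g(x, y) = x / (x² + y²)^((α+1)/2), the dipolar spatial-frequency map, and let the orientation map be θ(r e^{iφ}) = φ/2, whose gradient at z = (r cos φ, r sin φ) points in the unit direction u = (−sin φ, cos φ). Then for every r > 0 and φ ∈ ℝ, the cosine of the intersection angle ψ between the iso-orientation and iso-spatial-frequency level lines satisfies |⟪∇g(z), u⟫| · √(α² cos²(φ) + sin²(φ)) = ‖∇g(z)‖ · |sin(φ)|; i.e., cos ψ = |sin(φ)| / √(α² cos²(φ) + sin²(φ)). -/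
open scoped RealInnerProductSpace

noncomputable def dipole (α : ℝ) (v : EuclideanSpace ℝ (Fin 2)) : ℝ :=
  v 0 / (v 0 ^ 2 + v 1 ^ 2) ^ ((α + 1) / 2)

lemma dipole_hasGradientAt (α : ℝ) (v : EuclideanSpace ℝ (Fin 2))
    (hs : 0 < v 0 ^ 2 + v 1 ^ 2) :
    HasGradientAt (dipole α)
      (!₂[(v 1 ^ 2 - α * v 0 ^ 2) / (v 0 ^ 2 + v 1 ^ 2) ^ ((α + 3) / 2),
         (-(α + 1)) * v 0 * v 1 / (v 0 ^ 2 + v 1 ^ 2) ^ ((α + 3) / 2)] :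
        EuclideanSpace ℝ (Fin 2)) v := by
  set x := v 0 with hx
  set y := v 1 with hy
  set s := x ^ 2 + y ^ 2 with hsdef
  rw [hasGradientAt_iff_hasFDerivAt]
  have hdip : dipole α = fun w : EuclideanSpace ℝ (Fin 2) =>
      w 0 * (w 0 ^ 2 + w 1 ^ 2) ^ (-((α + 1) / 2)) := by
    funext w
    rw [Real.rpow_neg (by positivity)]
    simp [dipole, div_eq_mul_inv]
  have h0 : HasFDerivAt (fun w : EuclideanSpace ℝ (Fin 2) => w 0)
      (EuclideanSpace.proj 0 : EuclideanSpace ℝ (Fin 2) →L[ℝ] ℝ) v :=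
    (EuclideanSpace.proj 0 : EuclideanSpace ℝ (Fin 2) →L[ℝ] ℝ).hasFDerivAt
  have h1 : HasFDerivAt (fun w : EuclideanSpace ℝ (Fin 2) => w 1)
      (EuclideanSpace.proj 1 : EuclideanSpace ℝ (Fin 2) →L[ℝ] ℝ) v :=
    (EuclideanSpace.proj 1 : EuclideanSpace ℝ (Fin 2) →L[ℝ] ℝ).hasFDerivAt
  have hS : HasFDerivAt (fun w : EuclideanSpace ℝ (Fin 2) => w 0 ^ 2 + w 1 ^ 2)
      ((x • (EuclideanSpace.proj 0 : EuclideanSpace ℝ (Fin 2) →L[ℝ] ℝ)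
          + x • (EuclideanSpace.proj 0 : EuclideanSpace ℝ (Fin 2) →L[ℝ] ℝ))
        + (y • (EuclideanSpace.proj 1 : EuclideanSpace ℝ (Fin 2) →L[ℝ] ℝ)
          + y • (EuclideanSpace.proj 1 : EuclideanSpace ℝ (Fin 2) →L[ℝ] ℝ))) v := by
    simp only [pow_two]; exact (h0.mul h0).add (h1.mul h1)
  have hrp := hS.rpow_const (p := -((α + 1) / 2)) (Or.inl (ne_of_gt hs))
  have hf := h0.mul hrp
  rw [show ((fun w : EuclideanSpace ℝ (Fin 2) => w 0) * fun x : EuclideanSpace ℝ (Fin 2) =>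
    (x 0 ^ 2 + x 1 ^ 2) ^ (-((α + 1) / 2))) = dipole α from hdip.symm] at hf
  refine hf.congr_fderiv ?_
  symm
  ext w
  have hsne : s ≠ 0 := ne_of_gt hs
  have e3 : s ^ ((α + 3) / 2) = s ^ ((α + 1) / 2) * s := by
    rw [show (α + 3) / 2 = (α + 1) / 2 + 1 by ring, Real.rpow_add hs, Real.rpow_one]
  have e1 : s ^ (-((α + 1) / 2) - 1) = (s ^ ((α + 1) / 2) * s)⁻¹ := by
    rw [show -((α + 1) / 2) - 1 = -((α + 1) / 2 + 1) by ring, Real.rpow_neg hs.le,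
      Real.rpow_add hs, Real.rpow_one]
  have e2 : s ^ (-((α + 1) / 2)) = (s ^ ((α + 1) / 2))⁻¹ := by
    rw [Real.rpow_neg hs.le]
  have hT : s ^ ((α + 1) / 2) ≠ 0 := by positivity
  simp only [InnerProductSpace.toDual_apply_apply, PiLp.inner_apply, RCLike.inner_apply,
    Fin.sum_univ_two, Matrix.cons_val_zero, Matrix.cons_val_one, Matrix.head_cons,
    ContinuousLinearMap.add_apply, ContinuousLinearMap.smul_apply,
    PiLp.proj_apply, ContinuousLinearMap.coe_smul', Pi.smul_apply,
    smul_eq_mul, starRingEnd_apply, star_trivial]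
  rw [e3, e1, e2]
  field_simp
  ring

/-- The intersection angle `ψ` between iso-orientation lines (rays of the pinwheel
`r e^{iφ} ↦ φ/2`, whose gradient direction is the unit vector `u = (−sin φ, cos φ)`)
and iso-spatial-frequency lines of the dipole `g = γ_α` satisfies
`cos ψ = |⟪∇g, u⟫|/‖∇g‖ = |sin φ| / √(α² cos²φ + sin²φ)`. -/
theorem dipole_pinwheel_intersection_angle (α : ℝ) (hα : 0 < α) :
    ∀ r φ : ℝ, 0 < r →
      |⟪gradient (dipole α) !₂[r * Real.cos φ, r * Real.sin φ],
          (!₂[-Real.sin φ, Real.cos φ] : EuclideanSpace ℝ (Fin 2))⟫| *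
          Real.sqrt (α ^ 2 * Real.cos φ ^ 2 + Real.sin φ ^ 2) =
        ‖gradient (dipole α) !₂[r * Real.cos φ, r * Real.sin φ]‖ * |Real.sin φ| := by
  intro r φ hr
  set c := Real.cos φ
  set si := Real.sin φ
  have hcs : si ^ 2 + c ^ 2 = 1 := Real.sin_sq_add_cos_sq φ
  set v : EuclideanSpace ℝ (Fin 2) := !₂[r * c, r * si] with hv
  have hv0 : v 0 = r * c := rfl
  have hv1 : v 1 = r * si := rfl
  have hs : 0 < v 0 ^ 2 + v 1 ^ 2 := by
    rw [hv0, hv1]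
    have : (r * c) ^ 2 + (r * si) ^ 2 = r ^ 2 := by
      rw [mul_pow, mul_pow, ← mul_add, add_comm (c^2), hcs, mul_one]
    rw [this]; positivity
  have hgrad := (dipole_hasGradientAt α v hs).gradient
  rw [hgrad]
  set T := (v 0 ^ 2 + v 1 ^ 2) ^ ((α + 3) / 2) with hT
  have hTpos : 0 < T := Real.rpow_pos_of_pos hs _
  set a := (v 1 ^ 2 - α * v 0 ^ 2) / T with ha
  set b := (-(α + 1)) * v 0 * v 1 / T with hb
  have hinner : @inner ℝ (EuclideanSpace ℝ (Fin 2)) _ !₂[a, b] !₂[-si, c]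
      = -(r ^ 2 * si) / T := by
    simp only [PiLp.inner_apply, RCLike.inner_apply, Fin.sum_univ_two,
      Matrix.cons_val_zero, Matrix.cons_val_one, Matrix.head_cons,
      starRingEnd_apply, star_trivial]
    rw [ha, hb, hv0, hv1, mul_div_assoc', mul_div_assoc', ← add_div]
    congr 1
    linear_combination (-(r ^ 2) * si) * hcs
  have hnorm : @norm (EuclideanSpace ℝ (Fin 2)) _ !₂[a, b]
      = (r ^ 2 / T) * Real.sqrt (α ^ 2 * c ^ 2 + si ^ 2) := by
    rw [EuclideanSpace.norm_eq]
    simp only [Fin.sum_univ_two, Matrix.cons_val_zero, Matrix.cons_val_one,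
      Matrix.head_cons, Real.norm_eq_abs, sq_abs]
    have key : a ^ 2 + b ^ 2 = (r ^ 2 / T) ^ 2 * (α ^ 2 * c ^ 2 + si ^ 2) := by
      rw [ha, hb, hv0, hv1, div_pow, div_pow, ← add_div, div_pow,
        div_mul_eq_mul_div]
      congr 1
      linear_combination (((r * si) ^ 2 + α ^ 2 * (r * c) ^ 2) * r ^ 2) * hcs
    rw [key, Real.sqrt_mul (by positivity), Real.sqrt_sq (by positivity)]
  rw [hinner, hnorm, abs_div, abs_neg, abs_mul, abs_of_pos hTpos,
    abs_of_pos (by positivity : (0:ℝ) < r ^ 2)]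
  ring
end

section
/- Fix α > 0 and define h : ℝ → ℝ by h(φ) = arccos( |sin φ| / √(α² cos²(φ) + sin²(φ)) ). Let μ be the uniform probability measure on the interval (0, π) (i.e., (1/π) times Lebesgue measure restricted to (0, π)). Then the pushforward measure h_*μ equals the measure on ℝ with density ψ ↦ 2α / (π·((α² − 1)·cos²(ψ) + 1)) with respect to Lebesgue measure restricted to the interval (0, π/2). -/
open MeasureTheory Real Set
open scoped ENNReal

namespace AngleDistAux

/-- The key change-of-variables map, an involution of `(0, π/2)`. -/
noncomputable def g (α : ℝ) (φ : ℝ) : ℝ := arctan (α * (Real.cos φ / Real.sin φ))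

lemma denom_eq (α ψ : ℝ) :
    (α ^ 2 - 1) * Real.cos ψ ^ 2 + 1 = α ^ 2 * Real.cos ψ ^ 2 + Real.sin ψ ^ 2 := by
  have := Real.sin_sq_add_cos_sq ψ; nlinarith

lemma denom_pos {α : ℝ} (hα : 0 < α) {ψ : ℝ} (hψ : ψ ∈ Ioo 0 (π / 2)) :
    0 < (α ^ 2 - 1) * Real.cos ψ ^ 2 + 1 := by
  rw [denom_eq]
  have hs : 0 < Real.sin ψ :=
    Real.sin_pos_of_pos_of_lt_pi hψ.1 (hψ.2.trans (by linarith [Real.pi_pos]))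
  positivity

lemma sin_pos_of_mem {ψ : ℝ} (hψ : ψ ∈ Ioo 0 (π / 2)) : 0 < Real.sin ψ :=
  Real.sin_pos_of_pos_of_lt_pi hψ.1 (hψ.2.trans (by linarith [Real.pi_pos]))

lemma cos_pos_of_mem {ψ : ℝ} (hψ : ψ ∈ Ioo 0 (π / 2)) : 0 < Real.cos ψ :=
  Real.cos_pos_of_mem_Ioo ⟨by linarith [Real.pi_pos, hψ.1], hψ.2⟩

lemma g_mem {α : ℝ} (hα : 0 < α) {φ : ℝ} (hφ : φ ∈ Ioo 0 (π / 2)) :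
    g α φ ∈ Ioo 0 (π / 2) := by
  have hs := sin_pos_of_mem hφ
  have hc := cos_pos_of_mem hφ
  refine ⟨?_, Real.arctan_lt_pi_div_two _⟩
  have hx : (0 : ℝ) < α * (Real.cos φ / Real.sin φ) := by positivity
  calc (0 : ℝ) = arctan 0 := Real.arctan_zero.symm
    _ < _ := Real.arctan_strictMono hx

lemma h_eq {α : ℝ} (hα : 0 < α) {φ : ℝ} (hφ : φ ∈ Ioo 0 (π / 2)) :
    Real.arccos (|Real.sin φ| / Real.sqrt (α ^ 2 * Real.cos φ ^ 2 + Real.sin φ ^ 2))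
      = g α φ := by
  have hs := sin_pos_of_mem hφ
  have hc := cos_pos_of_mem hφ
  set D := α ^ 2 * Real.cos φ ^ 2 + Real.sin φ ^ 2 with hD
  have hDpos : 0 < D := by positivity
  set x := α * (Real.cos φ / Real.sin φ) with hx
  have hxpos : 0 < x := by positivity
  have h1 : 1 + x ^ 2 = D / Real.sin φ ^ 2 := by
    field_simp [hx, hD]; rw [hx, hD, mul_pow, div_pow, add_mul, one_mul, mul_assoc, div_mul_cancel₀ _ (pow_pos hs 2).ne']; ring
  have h2 : Real.sqrt (1 + x ^ 2) = Real.sqrt D / Real.sin φ := by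
    rw [h1, Real.sqrt_div hDpos.le, Real.sqrt_sq hs.le]
  have h3 : Real.cos (arctan x) = Real.sin φ / Real.sqrt D := by
    rw [Real.cos_arctan, h2, one_div_div]
  rw [abs_of_pos hs, ← h3, Real.arccos_cos]
  · rfl
  · calc (0:ℝ) = arctan 0 := Real.arctan_zero.symm
      _ ≤ arctan x := Real.arctan_strictMono.monotone hxpos.le
  · exact (Real.arctan_lt_pi_div_two x).le.trans (by linarith [Real.pi_pos])

lemma g_invol {α : ℝ} (hα : 0 < α) {ψ : ℝ} (hψ : ψ ∈ Ioo 0 (π / 2)) :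
    g α (g α ψ) = ψ := by
  have hs := sin_pos_of_mem hψ
  have hc := cos_pos_of_mem hψ
  have hmem := g_mem hα hψ
  have hs' := sin_pos_of_mem hmem
  have hc' := cos_pos_of_mem hmem
  have ht : Real.tan (g α ψ) = α * (Real.cos ψ / Real.sin ψ) := Real.tan_arctan _
  rw [Real.tan_eq_sin_div_cos] at ht
  have hkey : α * (Real.cos (g α ψ) / Real.sin (g α ψ)) = Real.tan ψ := by
    rw [Real.tan_eq_sin_div_cos]
    have hsg : Real.sin (g α ψ) = α * (Real.cos ψ / Real.sin ψ) * Real.cos (g α ψ) := by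
      field_simp at ht ⊢
      linarith [ht]
    rw [hsg]
    field_simp
  rw [show g α (g α ψ) = arctan (α * (Real.cos (g α ψ) / Real.sin (g α ψ))) from rfl,
    hkey, Real.arctan_tan (by linarith [hψ.1, Real.pi_pos]) hψ.2]

lemma g_injOn {α : ℝ} (hα : 0 < α) : InjOn (g α) (Ioo 0 (π / 2)) := by
  intro x hx y hy hxy
  have := congrArg (g α) hxy
  rwa [g_invol hα hx, g_invol hα hy] at this

lemma g_hasDerivAt {α : ℝ} (hα : 0 < α) {ψ : ℝ} (hψ : ψ ∈ Ioo 0 (π / 2)) :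
    HasDerivAt (g α) (-(α / ((α ^ 2 - 1) * Real.cos ψ ^ 2 + 1))) ψ := by
  have hs := sin_pos_of_mem hψ
  have hDpos := denom_pos hα hψ
  have hu : HasDerivAt (fun φ => α * (Real.cos φ / Real.sin φ))
      (α * ((-Real.sin ψ * Real.sin ψ - Real.cos ψ * Real.cos ψ) / Real.sin ψ ^ 2)) ψ :=
    (((Real.hasDerivAt_cos ψ).div (Real.hasDerivAt_sin ψ) hs.ne')).const_mul α
  have h := hu.arctan
  have heq : 1 / (1 + (α * (Real.cos ψ / Real.sin ψ)) ^ 2) *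
      (α * ((-Real.sin ψ * Real.sin ψ - Real.cos ψ * Real.cos ψ) / Real.sin ψ ^ 2))
      = -(α / ((α ^ 2 - 1) * Real.cos ψ ^ 2 + 1)) := by
    have hpyth := Real.sin_sq_add_cos_sq ψ
    rw [denom_eq]
    have hD2 : α ^ 2 * Real.cos ψ ^ 2 + Real.sin ψ ^ 2 ≠ 0 := by positivity
    have h3 : -Real.sin ψ * Real.sin ψ - Real.cos ψ * Real.cos ψ = -1 := by nlinarith
    rw [h3]
    field_simp
    ring
  rw [heq] at h
  exact h

end AngleDistAux

open AngleDistAux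

/-- For the pinwheel orientation map paired with the dipole spatial-frequency map
`cos(φ)/r^α`, the intersection angle at angular coordinate `φ` is
`h(φ) = arccos(|sin φ|/√(α² cos²φ + sin²φ))`. Pushing forward the uniform probability
measure on `(0, π)` by `h` yields the measure with density
`ψ ↦ 2α/(π((α² − 1)cos²ψ + 1))` with respect to Lebesgue measure on `(0, π/2)`. -/
theorem angle_distribution_pushforward (α : ℝ) (hα : 0 < α) :
    Measure.map
        (fun φ : ℝ =>
          Real.arccos (|Real.sin φ| /
            Real.sqrt (α ^ 2 * Real.cos φ ^ 2 + Real.sin φ ^ 2)))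
        (ENNReal.ofReal (1 / Real.pi) • volume.restrict (Set.Ioo 0 Real.pi)) =
      (volume.restrict (Set.Ioo 0 (Real.pi / 2))).withDensity
        (fun ψ => ENNReal.ofReal
          (2 * α / (Real.pi * ((α ^ 2 - 1) * Real.cos ψ ^ 2 + 1)))) := by
  have hπ := Real.pi_pos
  set h : ℝ → ℝ := fun φ =>
    Real.arccos (|Real.sin φ| / Real.sqrt (α ^ 2 * Real.cos φ ^ 2 + Real.sin φ ^ 2)) with hh
  have hmeas : Measurable h := by
    apply Real.continuous_arccos.measurable.comp
    fun_prop
  ext s hs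
  rw [Measure.map_apply hmeas hs, Measure.smul_apply, Measure.restrict_apply (hmeas hs),
    withDensity_apply _ hs, Measure.restrict_restrict hs]
  set A : Set ℝ := h ⁻¹' s with hA
  have hAmeas : MeasurableSet A := hmeas hs
  set t : Set ℝ := s ∩ Ioo 0 (π / 2) with htdef
  have htmeas : MeasurableSet t := hs.inter measurableSet_Ioo
  -- symmetry of h about π/2
  have hsym : ∀ x : ℝ, h (π - x) = h x := by
    intro x
    simp only [hh, Real.sin_pi_sub, Real.cos_pi_sub, neg_sq]
  -- split the interval
  have hsplit : volume (A ∩ Ioo 0 π)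
      = volume (A ∩ Ioo 0 (π / 2)) + volume (A ∩ Ioo (π / 2) π) := by
    have hdisj : Disjoint (A ∩ Ioo 0 (π / 2)) (A ∩ Ioo (π / 2) π) := by
      apply Set.disjoint_left.2
      rintro x ⟨-, hx1⟩ ⟨-, hx2⟩
      exact absurd hx2.1 (not_lt.2 hx1.2.le)
    have hu : volume ((A ∩ Ioo 0 (π / 2)) ∪ (A ∩ Ioo (π / 2) π))
        = volume (A ∩ Ioo 0 (π / 2)) + volume (A ∩ Ioo (π / 2) π) :=
      measure_union hdisj (hAmeas.inter measurableSet_Ioo)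
    refine le_antisymm ?_ ?_
    · have hsub : A ∩ Ioo 0 π
          ⊆ ((A ∩ Ioo 0 (π / 2)) ∪ (A ∩ Ioo (π / 2) π)) ∪ {π / 2} := by
        rintro x ⟨hxA, hx0, hxπ⟩
        rcases lt_trichotomy x (π / 2) with hlt | heq | hgt
        · exact Or.inl (Or.inl ⟨hxA, hx0, hlt⟩)
        · exact Or.inr (by simp [heq])
        · exact Or.inl (Or.inr ⟨hxA, hgt, hxπ⟩)
      calc volume (A ∩ Ioo 0 π)
          ≤ volume (((A ∩ Ioo 0 (π / 2)) ∪ (A ∩ Ioo (π / 2) π)) ∪ {π / 2}) :=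
            measure_mono hsub
        _ ≤ volume ((A ∩ Ioo 0 (π / 2)) ∪ (A ∩ Ioo (π / 2) π)) + volume ({π / 2} : Set ℝ) :=
            measure_union_le _ _
        _ = volume (A ∩ Ioo 0 (π / 2)) + volume (A ∩ Ioo (π / 2) π) := by
            rw [Real.volume_singleton, add_zero, hu]
    · rw [← hu]
      apply measure_mono
      rintro x (⟨hxA, hx1⟩ | ⟨hxA, hx2⟩)
      · exact ⟨hxA, hx1.1, hx1.2.trans (by linarith)⟩
      · exact ⟨hxA, by linarith [hx2.1], hx2.2⟩
  -- reflection
  have hrefl : volume (A ∩ Ioo (π / 2) π) = volume (A ∩ Ioo 0 (π / 2)) := by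
    have hpre : (fun x : ℝ => π - x) ⁻¹' (A ∩ Ioo 0 (π / 2)) = A ∩ Ioo (π / 2) π := by
      ext x
      simp only [Set.mem_preimage, Set.mem_inter_iff, Set.mem_Ioo, hA, hsym x]
      constructor
      · rintro ⟨hxA, h1, h2⟩; exact ⟨hxA, by linarith, by linarith⟩
      · rintro ⟨hxA, h1, h2⟩; exact ⟨hxA, by linarith, by linarith⟩
    rw [← hpre]
    exact (Measure.measurePreserving_sub_left volume π).measure_preimage
      (hAmeas.inter measurableSet_Ioo).nullMeasurableSet
  -- identify A ∩ (0, π/2) with the image of t under g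
  have himage : A ∩ Ioo 0 (π / 2) = g α '' t := by
    ext x
    constructor
    · rintro ⟨hxA, hx⟩
      refine ⟨g α x, ⟨?_, g_mem hα hx⟩, g_invol hα hx⟩
      have : h x = g α x := h_eq hα hx
      rw [hA] at hxA
      simpa [this] using hxA
    · rintro ⟨ψ, ⟨hψs, hψI⟩, rfl⟩
      refine ⟨?_, g_mem hα hψI⟩
      have h1 : h (g α ψ) = g α (g α ψ) := h_eq hα (g_mem hα hψI)
      have h2 : h (g α ψ) = ψ := by rw [h1, g_invol hα hψI]
      show h (g α ψ) ∈ s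
      rw [h2]
      exact hψs
  -- change of variables
  have hcov : volume (g α '' t)
      = ∫⁻ x in t, ENNReal.ofReal (α / ((α ^ 2 - 1) * Real.cos x ^ 2 + 1)) := by
    have := lintegral_abs_det_fderiv_eq_addHaar_image volume htmeas
      (f' := fun x => (1 : ℝ →L[ℝ] ℝ).smulRight (-(α / ((α ^ 2 - 1) * Real.cos x ^ 2 + 1))))
      (fun x hx => ((g_hasDerivAt hα hx.2).hasDerivWithinAt).hasFDerivWithinAt)
      ((g_injOn hα).mono Set.inter_subset_right)
    rw [← this]
    apply setLIntegral_congr_fun htmeas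
    intro x hx
    beta_reduce
    rw [ContinuousLinearMap.det_smulRight, ContinuousLinearMap.one_apply, one_mul, abs_neg, abs_of_pos (by
      have := denom_pos hα hx.2
      positivity)]
  -- put everything together
  rw [hsplit, hrefl, himage, hcov]
  have hfmeas : Measurable fun x : ℝ =>
      ENNReal.ofReal (α / ((α ^ 2 - 1) * Real.cos x ^ 2 + 1)) := by
    apply ENNReal.measurable_ofReal.comp
    fun_prop
  rw [← two_mul, ← lintegral_const_mul _ hfmeas, smul_eq_mul,
    ← lintegral_const_mul' _ _ ENNReal.ofReal_ne_top]
  apply setLIntegral_congr_fun htmeas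
  intro x hx
  have hD := denom_pos hα hx.2
  beta_reduce
  rw [(by norm_num : (2 : ℝ≥0∞) = ENNReal.ofReal (2 : ℝ)),
    ← ENNReal.ofReal_mul (by norm_num), ← ENNReal.ofReal_mul (by positivity)]
  congr 1
  field_simp
end
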